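/- Let W ⊆ C^ω be a winning condition, M a skeleton, and suppose W is M-prefix-independent and M-cycle-consistent. Let γ, γ₁, γ₂, γ' be cycles of M with γ = γ₁γ₂ (γ₁ a cycle on some state m appearing in γ, γ₂ the remaining cycle on m). If γ and γ₁ have different values (one winning, one losing as cycles on m), then γ₁ and γ are competing and γ₁ ◁ γ, i.e., the combined cycle γ₁γ has the same value as γ. -/
import Mathlib

/-- Concatenation of a finite word with an infinite word. -/
def app {C : Type*} : List C → (ℕ → C) → (ℕ → C)
  | [], w' => w'
  | c :: u, w' => fun i =>
    match i with
    | 0 => c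
    | j + 1 => app u w' j

/-- Extension of the update function of a skeleton to finite words. -/
def updStar {C M : Type*} (upd : M → C → M) (m : M) (w : List C) : M :=
  w.foldl upd m

/-- The infinite word `γ^ω` obtained by repeating a (nonempty) finite word forever. -/
def periodic {C : Type*} [Inhabited C] (γ : List C) : ℕ → C :=
  fun i => γ.getD (i % γ.length) default

/-- The infinite word obtained by concatenating the (nonempty) finite words
`ws 0, ws 1, ws 2, …`. -/
def concatSeq {C : Type*} [Inhabited C] (ws : ℕ → List C) : ℕ → C :=
  fun i => (((List.range (i + 1)).map ws).flatten).getD i default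

/-- `W` is `M`-prefix-independent: any two finite words reaching the same state of the
skeleton from the initial state have the same winning continuations. -/
def PrefIndep {C M : Type*} (upd : M → C → M) (init : M) (W : Set (ℕ → C)) : Prop :=
  ∀ w₁ w₂ : List C, updStar upd init w₁ = updStar upd init w₂ →
    ∀ w' : ℕ → C, (app w₁ w' ∈ W ↔ app w₂ w' ∈ W)

/-- `W` is `M`-cycle-consistent: after any finite word `w`, any infinite concatenation of
winning (resp. losing) cycles on the state reached by `w` yields a winning (resp. losing)
continuation of `w`. -/
def CycleConsistent {C M : Type*} [Inhabited C] (upd : M → C → M) (init : M)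
    (W : Set (ℕ → C)) : Prop :=
  ∀ w : List C, ∀ ws : ℕ → List C,
    (∀ k, ws k ≠ [] ∧ updStar upd (updStar upd init w) (ws k) = updStar upd init w) →
    ((∀ k, app w (periodic (ws k)) ∈ W) → app w (concatSeq ws) ∈ W) ∧
    ((∀ k, app w (periodic (ws k)) ∉ W) → app w (concatSeq ws) ∉ W)

namespace S19
set_option linter.unusedSectionVars false

variable {C M : Type*} [Inhabited C]

/-! ### Basic lemmas about `app` -/

theorem app_append (u v : List C) (y : ℕ → C) : app (u ++ v) y = app u (app v y) := by
  induction u with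
  | nil => rfl
  | cons c u ih =>
    funext i
    cases i with
    | zero => rfl
    | succ j => exact congrFun ih j

theorem app_eq (u : List C) (y : ℕ → C) (i : ℕ) :
    app u y i = if i < u.length then u.getD i default else y (i - u.length) := by
  induction u generalizing i with
  | nil => simp [app]
  | cons c u ih =>
    cases i with
    | zero => simp [app]
    | succ j =>
      show app u y j = _
      rw [ih]
      by_cases h : j < u.length
      · simp [h, Nat.succ_lt_succ_iff]
      · simp [h, Nat.succ_lt_succ_iff, Nat.succ_sub_succ]

/-! ### updStar lemmas -/

theorem updStar_append (upd : M → C → M) (m : M) (u v : List C) :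
    updStar upd m (u ++ v) = updStar upd (updStar upd m u) v :=
  List.foldl_append ..

/-! ### list powers -/

def lpow (l : List C) : ℕ → List C
  | 0 => []
  | n + 1 => l ++ lpow l n

theorem lpow_succ (l : List C) (n : ℕ) : lpow l (n+1) = l ++ lpow l n := rfl

theorem lpow_comm (l : List C) (n : ℕ) : l ++ lpow l n = lpow l n ++ l := by
  induction n with
  | zero => simp [lpow]
  | succ n ih => rw [lpow_succ, List.append_assoc, ← ih]

theorem lpow_succ_right (l : List C) (n : ℕ) : lpow l (n+1) = lpow l n ++ l := by
  rw [lpow_succ, lpow_comm]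

theorem lpow_one (l : List C) : lpow l 1 = l := by
  rw [show (1:ℕ) = 0 + 1 from rfl, lpow_succ]
  simp [lpow]

theorem length_lpow (l : List C) (n : ℕ) : (lpow l n).length = n * l.length := by
  induction n with
  | zero => simp [lpow]
  | succ n ih => rw [lpow_succ, List.length_append, ih]; ring

theorem lpow_ne_nil (l : List C) (h : l ≠ []) {n : ℕ} (hn : 0 < n) : lpow l n ≠ [] := by
  cases n with
  | zero => omega
  | succ n =>
    rw [lpow_succ]
    intro hc
    exact h (List.append_eq_nil_iff.mp hc).1

theorem updStar_lpow (upd : M → C → M) (m : M) (l : List C) (h : updStar upd m l = m) :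
    ∀ n, updStar upd m (lpow l n) = m
  | 0 => rfl
  | n + 1 => by rw [lpow_succ, updStar_append, h, updStar_lpow upd m l h n]

theorem getD_lpow (l : List C) (n i : ℕ) (h : i < (lpow l n).length) :
    (lpow l n).getD i default = l.getD (i % l.length) default := by
  induction n generalizing i with
  | zero => simp [lpow] at h
  | succ n ih =>
    rw [lpow_succ] at h ⊢
    by_cases hi : i < l.length
    · rw [List.getD_append _ _ _ _ hi, Nat.mod_eq_of_lt hi]
    · push_neg at hi
      rw [List.getD_append_right _ _ _ _ hi]
      rw [List.length_append] at h
      have h2 : i - l.length < (lpow l n).length := by omega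
      rw [ih _ h2, Nat.mod_eq_sub_mod hi]

/-! ### flatten-of-range lemmas and `concatSeq` -/

theorem flatten_range_succ (ws : ℕ → List C) (n : ℕ) :
    ((List.range (n+1)).map ws).flatten = ((List.range n).map ws).flatten ++ ws n := by
  rw [List.range_succ]; simp

theorem le_length_flatten (ws : ℕ → List C) (h : ∀ k, ws k ≠ []) (n : ℕ) :
    n ≤ ((List.range n).map ws).flatten.length := by
  induction n with
  | zero => simp
  | succ n ih =>
    rw [flatten_range_succ, List.length_append]
    have := List.length_pos_iff.mpr (h n)
    omega

theorem length_flatten_mono (ws : ℕ → List C) {m n : ℕ} (h : m ≤ n) :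
    ((List.range m).map ws).flatten.length ≤ ((List.range n).map ws).flatten.length := by
  induction n, h using Nat.le_induction with
  | base => exact le_rfl
  | succ n hmn ih =>
    rw [flatten_range_succ, List.length_append]
    omega

theorem getD_flatten_mono (ws : ℕ → List C) {m n i : ℕ} (hmn : m ≤ n)
    (hi : i < ((List.range m).map ws).flatten.length) :
    ((List.range n).map ws).flatten.getD i default
      = ((List.range m).map ws).flatten.getD i default := by
  induction n, hmn using Nat.le_induction with
  | base => rfl
  | succ n hmn ih =>
    rw [flatten_range_succ,
      List.getD_append _ _ _ _ (lt_of_lt_of_le hi (length_flatten_mono ws hmn)), ih]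

theorem concatSeq_eq_getD (ws : ℕ → List C) (h : ∀ k, ws k ≠ []) (n i : ℕ)
    (hi : i < ((List.range n).map ws).flatten.length) :
    concatSeq ws i = ((List.range n).map ws).flatten.getD i default := by
  show ((List.range (i+1)).map ws).flatten.getD i default = _
  rcases le_total n (i+1) with hle | hle
  · exact getD_flatten_mono ws hle hi
  · have hi' : i < ((List.range (i+1)).map ws).flatten.length :=
      lt_of_lt_of_le (Nat.lt_succ_self i) (le_length_flatten ws h (i+1))
    exact (getD_flatten_mono ws hle hi').symm

/-! ### rotation of periodic words -/

theorem periodic_rotate (u v : List C) (hu : u ≠ []) (hv : v ≠ []) :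
    periodic (u ++ v) = app u (periodic (v ++ u)) := by
  have hul : 0 < u.length := List.length_pos_iff.mpr hu
  have hvl : 0 < v.length := List.length_pos_iff.mpr hv
  funext i
  rw [app_eq]
  by_cases hi : i < u.length
  · have h1 : i % (u ++ v).length = i := by
      apply Nat.mod_eq_of_lt; rw [List.length_append]; omega
    simp only [hi, if_true]
    show (u ++ v).getD (i % (u ++ v).length) default = _
    rw [h1, List.getD_append _ _ _ _ hi]
  · push_neg at hi
    simp only [Nat.not_lt.mpr hi, if_false]
    show (u ++ v).getD (i % (u ++ v).length) default
      = (v ++ u).getD ((i - u.length) % (v ++ u).length) default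
    set L := u.length + v.length with hL
    have hLuv : (u ++ v).length = L := by rw [List.length_append]
    have hLvu : (v ++ u).length = L := by rw [List.length_append]; omega
    rw [hLuv, hLvu]
    set j := i - u.length with hj
    set r := j % L with hr
    have hrL : r < L := Nat.mod_lt _ (by omega)
    have hiL : i % L = (r + u.length) % L := by
      have h1 : i = j + u.length := by omega
      rw [h1, Nat.add_mod j u.length L, ← hr]
      conv_rhs => rw [Nat.add_mod r u.length L, Nat.mod_eq_of_lt hrL]
    by_cases hrv : r < v.length
    · have h2 : (r + u.length) % L = r + u.length := by
        apply Nat.mod_eq_of_lt; omega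
      rw [hiL, h2]
      rw [List.getD_append_right _ _ _ _ (by omega : u.length ≤ r + u.length)]
      rw [List.getD_append _ _ _ _ hrv]
      congr 1
      omega
    · push_neg at hrv
      have h2 : (r + u.length) % L = r - v.length := by
        rw [Nat.mod_eq_sub_mod (by omega : L ≤ r + u.length),
          show r + u.length - L = r - v.length by omega]
        exact Nat.mod_eq_of_lt (by omega)
      rw [hiL, h2]
      rw [List.getD_append _ _ _ _ (by omega : r - v.length < u.length)]
      rw [List.getD_append_right _ _ _ _ hrv]

/-! ### concatSeq of an alternating sequence is periodic -/

theorem concatSeq_alt (u v : List C) (hu : u ≠ []) (hv : v ≠ []) :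
    concatSeq (fun k => if k % 2 = 0 then u else v) = periodic (u ++ v) := by
  set ws : ℕ → List C := fun k => if k % 2 = 0 then u else v with hws
  have hne : ∀ k, ws k ≠ [] := by
    intro k; simp only [hws]; split <;> assumption
  have hfl : ∀ n, ((List.range (2*n)).map ws).flatten = lpow (u ++ v) n := by
    intro n
    induction n with
    | zero => simp [lpow]
    | succ n ih =>
      have h2 : 2*(n+1) = (2*n) + 1 + 1 := by ring
      rw [h2, flatten_range_succ, flatten_range_succ, ih, lpow_succ_right]
      have e1 : ws (2*n) = u := by
        simp only [hws]; rw [if_pos (Nat.mul_mod_right 2 n)]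
      have e2 : ws (2*n + 1) = v := by
        simp only [hws]; rw [if_neg (by omega)]
      rw [e1, e2, List.append_assoc]
  funext i
  have huvl : 0 < (u ++ v).length := by
    rw [List.length_append]; have := List.length_pos_iff.mpr hu; omega
  have hlen : i < ((List.range (2*(i+1))).map ws).flatten.length := by
    rw [hfl, length_lpow]
    calc i < i + 1 := Nat.lt_succ_self i
    _ ≤ (i+1) * (u ++ v).length := Nat.le_mul_of_pos_right _ huvl
  rw [concatSeq_eq_getD ws hne (2*(i+1)) i hlen, hfl,
    getD_lpow _ _ _ (by rw [← hfl]; exact hlen)]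
  rfl

/-! ### The core contradiction -/

theorem core (upd : M → C → M) (init : M) (W : Set (ℕ → C))
    (hpi : PrefIndep upd init W) (hcc : CycleConsistent upd init W)
    (m : M) (w : List C) (hw : updStar upd init w = m)
    (a b : List C) (ha : a ≠ []) (hb : b ≠ [])
    (hca : updStar upd m a = m) (hcb : updStar upd m b = m)
    (hA : app w (periodic a) ∈ W)
    (hAB : app w (periodic (a ++ b)) ∉ W)
    (hAAB : app w (periodic (a ++ (a ++ b))) ∈ W) : False := by
  classical
  -- rotation invariance of cycle values
  have rot : ∀ u v : List C, u ≠ [] → v ≠ [] → updStar upd m u = m → updStar upd m v = m →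
      (app w (periodic (u ++ v)) ∈ W ↔ app w (periodic (v ++ u)) ∈ W) := by
    intro u v hu hv hcu hcv
    have h1 : app w (periodic (u ++ v)) = app (w ++ u) (periodic (v ++ u)) := by
      rw [app_append]
      exact congrArg (app w) (periodic_rotate u v hu hv)
    rw [h1]
    exact hpi (w ++ u) w (by rw [updStar_append, hw, hcu]) _
  -- concatenation of two same-value cycles keeps the value
  have prod : ∀ u v : List C, u ≠ [] → v ≠ [] → updStar upd m u = m → updStar upd m v = m →
      ((app w (periodic u) ∈ W → app w (periodic v) ∈ W → app w (periodic (u ++ v)) ∈ W) ∧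
       (app w (periodic u) ∉ W → app w (periodic v) ∉ W → app w (periodic (u ++ v)) ∉ W)) := by
    intro u v hu hv hcu hcv
    set ws : ℕ → List C := fun k => if k % 2 = 0 then u else v with hws
    have hconds : ∀ k, ws k ≠ [] ∧
        updStar upd (updStar upd init w) (ws k) = updStar upd init w := by
      intro k
      rw [hw]
      constructor
      · simp only [hws]; split <;> assumption
      · simp only [hws]; split <;> assumption
    have H := hcc w ws hconds
    rw [show concatSeq ws = periodic (u ++ v) from concatSeq_alt u v hu hv] at H
    constructor
    · intro h1 h2
      exact H.1 (by intro k; simp only [hws]; split <;> assumption)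
    · intro h1 h2
      exact H.2 (by intro k; simp only [hws]; split <;> assumption)
  have hB : app w (periodic b) ∉ W := fun h => hAB ((prod a b ha hb hca hcb).1 hA h)
  have hBA : app w (periodic (b ++ a)) ∉ W := fun h => hAB ((rot b a hb ha hcb hca).mp h)
  have haa_ne : a ++ a ≠ [] := fun hc => ha (List.append_eq_nil_iff.mp hc).1
  have hcaa : updStar upd m (a ++ a) = m := by rw [updStar_append, hca, hca]
  have hBAA : app w (periodic (b ++ (a ++ a))) ∈ W := by
    apply (rot b (a ++ a) hb haa_ne hcb hcaa).mpr
    rw [List.append_assoc]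
    exact hAAB
  have hbaa_ne : b ++ (a ++ a) ≠ [] := fun hc => hb (List.append_eq_nil_iff.mp hc).1
  have hcbaa : updStar upd m (b ++ (a ++ a)) = m := by rw [updStar_append, hcb, hcaa]
  have hba_ne : b ++ a ≠ [] := fun hc => hb (List.append_eq_nil_iff.mp hc).1
  have hcba : updStar upd m (b ++ a) = m := by rw [updStar_append, hcb, hca]
  -- slope-1 cycles a^{t+1} b^{t+1} all have the value of ab (losing)
  have A' : ∀ t, app w (periodic (lpow a (t+1) ++ lpow b (t+1))) ∉ W := by
    intro t
    induction t with
    | zero => rw [lpow_one, lpow_one]; exact hAB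
    | succ t ih =>
      intro hWin
      have e1 : lpow a (t+1+1) ++ lpow b (t+1+1)
          = a ++ (lpow a (t+1) ++ lpow b (t+1+1)) := by
        rw [lpow_succ a (t+1), List.append_assoc]
      rw [e1] at hWin
      have hcx : updStar upd m (lpow a (t+1) ++ lpow b (t+1+1)) = m := by
        rw [updStar_append, updStar_lpow upd m a hca, updStar_lpow upd m b hcb]
      have hx_ne : lpow a (t+1) ++ lpow b (t+1+1) ≠ [] :=
        fun hc => (lpow_ne_nil a ha (Nat.succ_pos t)) (List.append_eq_nil_iff.mp hc).1
      have h2 := (rot a _ ha hx_ne hca hcx).mp hWin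
      have e2 : (lpow a (t+1) ++ lpow b (t+1+1)) ++ a
          = (lpow a (t+1) ++ lpow b (t+1)) ++ (b ++ a) := by
        rw [lpow_succ_right b (t+1)]
        simp [List.append_assoc]
      rw [e2] at h2
      have hy_ne : lpow a (t+1) ++ lpow b (t+1) ≠ [] :=
        fun hc => (lpow_ne_nil a ha (Nat.succ_pos t)) (List.append_eq_nil_iff.mp hc).1
      have hcy : updStar upd m (lpow a (t+1) ++ lpow b (t+1)) = m := by
        rw [updStar_append, updStar_lpow upd m a hca, updStar_lpow upd m b hcb]
      exact (prod _ _ hy_ne hba_ne hcy hcba).2 ih hBA h2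
  -- slope-1/2 cycles a^{2(t+1)} b^{t+1} all have the value of aab (winning)
  have B' : ∀ t, app w (periodic (lpow a (2*(t+1)) ++ lpow b (t+1))) ∈ W := by
    intro t
    induction t with
    | zero =>
      have e : lpow a (2*(0+1)) ++ lpow b (0+1) = a ++ (a ++ b) := by
        rw [show 2*(0+1) = 1+1 from rfl, lpow_succ, lpow_one, lpow_one, List.append_assoc]
      rw [e]
      exact hAAB
    | succ t ih =>
      have e0 : 2*(t+1+1) = 2*(t+1) + 1 + 1 := by ring
      have e2 : lpow a (2*(t+1+1)) ++ lpow b (t+1+1)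
          = (a ++ a) ++ (lpow a (2*(t+1)) ++ lpow b (t+1+1)) := by
        rw [e0, lpow_succ, lpow_succ, ← List.append_assoc, List.append_assoc]
      rw [e2]
      have hx_ne : lpow a (2*(t+1)) ++ lpow b (t+1+1) ≠ [] :=
        fun hc => (lpow_ne_nil a ha (by omega : 0 < 2*(t+1))) (List.append_eq_nil_iff.mp hc).1
      have hcx : updStar upd m (lpow a (2*(t+1)) ++ lpow b (t+1+1)) = m := by
        rw [updStar_append, updStar_lpow upd m a hca, updStar_lpow upd m b hcb]
      apply (rot (a ++ a) _ haa_ne hx_ne hcaa hcx).mpr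
      have e3 : (lpow a (2*(t+1)) ++ lpow b (t+1+1)) ++ (a ++ a)
          = (lpow a (2*(t+1)) ++ lpow b (t+1)) ++ (b ++ (a ++ a)) := by
        rw [lpow_succ_right b (t+1)]
        simp [List.append_assoc]
      rw [e3]
      have hy_ne : lpow a (2*(t+1)) ++ lpow b (t+1) ≠ [] :=
        fun hc => (lpow_ne_nil a ha (by omega : 0 < 2*(t+1))) (List.append_eq_nil_iff.mp hc).1
      have hcy : updStar upd m (lpow a (2*(t+1)) ++ lpow b (t+1)) = m := by
        rw [updStar_append, updStar_lpow upd m a hca, updStar_lpow upd m b hcb]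
      exact (prod _ _ hy_ne hbaa_ne hcy hcbaa).1 ih hBAA
  -- the two families of blocks
  set P : ℕ → List C := fun k => lpow a (2^k) ++ lpow b (2^k) with hP
  set Q : ℕ → List C := fun k => lpow b (2^k) ++ lpow a (2^(k+1)) with hQ
  have hpos : ∀ k : ℕ, 0 < 2^k := fun k => Nat.two_pow_pos k
  have hPne : ∀ k, P k ≠ [] := by
    intro k hc
    simp only [hP] at hc
    exact (lpow_ne_nil a ha (hpos k)) (List.append_eq_nil_iff.mp hc).1
  have hQne : ∀ k, Q k ≠ [] := by
    intro k hc
    simp only [hQ] at hc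
    exact (lpow_ne_nil b hb (hpos k)) (List.append_eq_nil_iff.mp hc).1
  have hPcyc : ∀ k, updStar upd m (P k) = m := by
    intro k
    simp only [hP]
    rw [updStar_append, updStar_lpow upd m a hca, updStar_lpow upd m b hcb]
  have hQcyc : ∀ k, updStar upd m (Q k) = m := by
    intro k
    simp only [hQ]
    rw [updStar_append, updStar_lpow upd m b hcb, updStar_lpow upd m a hca]
  have valP : ∀ k, app w (periodic (P k)) ∉ W := by
    intro k
    have h2k : 2^k = (2^k - 1) + 1 := by have := hpos k; omega
    have hA' := A' (2^k - 1)
    rw [← h2k] at hA'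
    simpa only [hP] using hA'
  have valQ : ∀ k, app w (periodic (Q k)) ∈ W := by
    intro k
    have h2k1 : 2*((2^k - 1) + 1) = 2^(k+1) := by
      rw [pow_succ]; have := hpos k; omega
    have h2k : (2^k - 1) + 1 = 2^k := by have := hpos k; omega
    have hB' := B' (2^k - 1)
    rw [h2k1, h2k] at hB'
    have hrot := (rot (lpow b (2^k)) (lpow a (2^(k+1))) (lpow_ne_nil b hb (hpos k))
      (lpow_ne_nil a ha (hpos (k+1))) (updStar_lpow upd m b hcb _)
      (updStar_lpow upd m a hca _)).mpr hB'
    simpa only [hQ] using hrot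
  -- the two decompositions of the same infinite word
  have Efl : ∀ n, ((List.range (n+1)).map P).flatten
      = a ++ (((List.range n).map Q).flatten ++ lpow b (2^n)) := by
    intro n
    induction n with
    | zero =>
      rw [flatten_range_succ]
      simp only [List.range_zero, List.map_nil, List.flatten_nil, List.nil_append, hP]
      rw [pow_zero, lpow_one, lpow_one]
    | succ n ih =>
      rw [flatten_range_succ, ih, flatten_range_succ]
      simp only [hP, hQ]
      simp [List.append_assoc]
  have ceq : concatSeq P = app a (concatSeq Q) := by
    funext i
    rw [app_eq]
    by_cases hi : i < a.length
    · simp only [hi, if_true]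
      have hlen0 : i < ((List.range 1).map P).flatten.length := by
        rw [Efl 0, List.length_append]; omega
      rw [concatSeq_eq_getD P hPne 1 i hlen0, Efl 0, List.getD_append _ _ _ _ hi]
    · push_neg at hi
      simp only [Nat.not_lt.mpr hi, if_false]
      set j := i - a.length with hj
      have hjlen : j < ((List.range (j+1)).map Q).flatten.length :=
        lt_of_lt_of_le (Nat.lt_succ_self j) (le_length_flatten Q hQne (j+1))
      have hilen : i < ((List.range (j+1+1)).map P).flatten.length := by
        rw [Efl (j+1), List.length_append, List.length_append]
        omega
      rw [concatSeq_eq_getD P hPne (j+1+1) i hilen, Efl (j+1),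
        List.getD_append_right _ _ _ _ hi,
        List.getD_append _ _ _ _
          (by omega : i - a.length < (((List.range (j+1)).map Q).flatten).length),
        ← concatSeq_eq_getD Q hQne (j+1) (i - a.length) (by omega)]
  have hPconds : ∀ k, P k ≠ [] ∧
      updStar upd (updStar upd init w) (P k) = updStar upd init w := by
    intro k; rw [hw]; exact ⟨hPne k, hPcyc k⟩
  have hw' : updStar upd init (w ++ a) = m := by rw [updStar_append, hw, hca]
  have hQconds : ∀ k, Q k ≠ [] ∧
      updStar upd (updStar upd init (w ++ a)) (Q k) = updStar upd init (w ++ a) := by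
    intro k; rw [hw']; exact ⟨hQne k, hQcyc k⟩
  have hnotin : app w (concatSeq P) ∉ W := (hcc w P hPconds).2 valP
  have hin : app (w ++ a) (concatSeq Q) ∈ W :=
    (hcc (w ++ a) Q hQconds).1
      (fun k => (hpi w (w ++ a) (by rw [hw, hw']) (periodic (Q k))).mp (valQ k))
  apply hnotin
  rw [app_append, ← ceq] at hin
  exact hin

theorem prefIndep_compl {upd : M → C → M} {init : M} {W : Set (ℕ → C)}
    (h : PrefIndep upd init W) : PrefIndep upd init Wᶜ := by
  intro w₁ w₂ he w'
  have := h w₁ w₂ he w'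
  simp only [Set.mem_compl_iff]
  tauto

theorem cycleConsistent_compl {upd : M → C → M} {init : M} {W : Set (ℕ → C)}
    (h : CycleConsistent upd init W) : CycleConsistent upd init Wᶜ := by
  intro w ws hws
  have H := h w ws hws
  constructor
  · intro hk
    simp only [Set.mem_compl_iff] at hk ⊢
    exact H.2 hk
  · intro hk
    simp only [Set.mem_compl_iff, not_not] at hk ⊢
    exact H.1 hk

end S19

/-- if `γ = γ₁γ₂` with `γ₁, γ₂` cycles on `m`, and `γ` and `γ₁` have
different values, then `γ₁` and `γ` are competing and `γ₁ ◁ γ`: the combined cycle `γ₁γ`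
has the same value as `γ`. -/
theorem stmt19 {C M : Type*} [Inhabited C] [Finite M]
    (upd : M → C → M) (init : M) (W : Set (ℕ → C))
    (hpi : PrefIndep upd init W) (hcc : CycleConsistent upd init W)
    (m : M) (w : List C) (hw : updStar upd init w = m)
    (γ γ₁ γ₂ : List C) (h₁ne : γ₁ ≠ []) (h₂ne : γ₂ ≠ [])
    (h₁ : updStar upd m γ₁ = m) (h₂ : updStar upd m γ₂ = m)
    (hγ : γ = γ₁ ++ γ₂)
    (hdiff : ¬ (app w (periodic γ₁) ∈ W ↔ app w (periodic γ) ∈ W)) :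
    (app w (periodic (γ₁ ++ γ)) ∈ W ↔ app w (periodic γ) ∈ W) := by
  classical
  subst hγ
  by_cases h1 : app w (periodic γ₁) ∈ W
  · have h2 : app w (periodic (γ₁ ++ γ₂)) ∉ W := fun h => hdiff ⟨fun _ => h, fun _ => h1⟩
    exact ⟨fun h3 => (S19.core upd init W hpi hcc m w hw γ₁ γ₂ h₁ne h₂ne h₁ h₂
        h1 h2 h3).elim,
      fun h4 => (h2 h4).elim⟩
  · have h2 : app w (periodic (γ₁ ++ γ₂)) ∈ W := by
      by_contra h2
      exact hdiff ⟨fun h => (h1 h).elim, fun h => (h2 h).elim⟩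
    have h3 : app w (periodic (γ₁ ++ (γ₁ ++ γ₂))) ∈ W := by
      by_contra h3
      exact S19.core upd init Wᶜ (S19.prefIndep_compl hpi) (S19.cycleConsistent_compl hcc)
        m w hw γ₁ γ₂ h₁ne h₂ne h₁ h₂
        (by simpa using h1) (by simpa using h2) (by simpa using h3)
    exact ⟨fun _ => h2, fun _ => h3⟩
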